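/- In the setting of a tree network of Kuramoto oscillators whose unique flow solution satisfies |F_e| < K_e on all edges: any fixed point for which at least one edge has cos(θ_i − θ_j) < 0 is linearly unstable, i.e., the Hessian of the potential has a negative eigenvalue. Specifically, if edge e₀ = (u,v) has cos(θ_u − θ_v) < 0, and V₁ is the vertex set of the component of the tree minus e₀ containing u, then the indicator vector of V₁ is a test vector w with wᵀMw = K_{e₀}cos(θ_u − θ_v) < 0. -/

import Mathlib

open Real

open scoped Classical in
theorem tree_nonnormal_unstable (N : ℕ) (G : SimpleGraph (Fin N))
    (htree : G.IsTree)
    (K : Matrix (Fin N) (Fin N) ℝ)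
    (hKsymm : ∀ j ℓ, K j ℓ = K ℓ j)
    (hKpos : ∀ j ℓ, G.Adj j ℓ → 0 < K j ℓ)
    (hKzero : ∀ j ℓ, ¬G.Adj j ℓ → K j ℓ = 0)
    (θ : Fin N → ℝ)
    (M : Matrix (Fin N) (Fin N) ℝ)
    (hM : ∀ j ℓ, M j ℓ = if j = ℓ then ∑ k, K j k * Real.cos (θ j - θ k)
      else -(K j ℓ * Real.cos (θ j - θ ℓ)))
    (u v : Fin N) (huv : G.Adj u v)
    (hcosneg : Real.cos (θ u - θ v) < 0)
    (w : Fin N → ℝ)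
    (hw : ∀ j, w j = if (G.deleteEdges {s(u, v)}).Reachable u j then 1 else 0) :
    dotProduct w (M.mulVec w) = K u v * Real.cos (θ u - θ v) ∧
    dotProduct w (M.mulVec w) < 0 ∧
    ¬M.PosSemidef := by
  set H := G.deleteEdges {s(u, v)} with hH
  -- basic values of w
  have hwu : w u = 1 := by rw [hw, if_pos (SimpleGraph.Reachable.refl u)]
  have hwv : w v = 0 := by
    have hbridge : G.IsBridge s(u, v) :=
      (SimpleGraph.isAcyclic_iff_forall_adj_isBridge.mp htree.IsAcyclic) huv
    have hnr : ¬ H.Reachable u v := hbridge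
    rw [hw, if_neg hnr]
  -- w is constant along edges other than s(u,v)
  have hsame : ∀ j ℓ : Fin N, G.Adj j ℓ → s(j, ℓ) ≠ s(u, v) → w j = w ℓ := by
    intro j ℓ hadj hne
    have hHadj : H.Adj j ℓ := by
      rw [hH, SimpleGraph.deleteEdges_adj]
      exact ⟨hadj, by simpa using hne⟩
    have hiff : H.Reachable u j ↔ H.Reachable u ℓ :=
      ⟨fun h => h.trans hHadj.reachable, fun h => h.trans hHadj.symm.reachable⟩
    rw [hw, hw]
    by_cases h : H.Reachable u j
    · rw [if_pos h, if_pos (hiff.mp h)]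
    · rw [if_neg h, if_neg (fun h' => h (hiff.mpr h'))]
  set c : Fin N → Fin N → ℝ := fun j ℓ => K j ℓ * Real.cos (θ j - θ ℓ) with hc
  have hcjj : ∀ j, c j j = 0 := by
    intro j; simp [hc, hKzero j j (G.irrefl)]
  -- rewrite the quadratic form entries
  have hmv : ∀ j, (M.mulVec w) j = ∑ ℓ, c j ℓ * (w j - w ℓ) := by
    intro j
    have hterm : ∀ ℓ, M j ℓ * w ℓ =
        (if ℓ = j then (∑ k, c j k) * w j + c j j * w j else 0) - c j ℓ * w ℓ := by
      intro ℓ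
      rw [hM]
      by_cases h : j = ℓ
      · subst h; simp [hcjj j, hc]
      · have h' : ¬ ℓ = j := fun hh => h hh.symm
        simp [h, h', hc]
    calc (M.mulVec w) j = ∑ ℓ, M j ℓ * w ℓ := rfl
      _ = ∑ ℓ, ((if ℓ = j then (∑ k, c j k) * w j + c j j * w j else 0) - c j ℓ * w ℓ) := by
          exact Finset.sum_congr rfl fun ℓ _ => hterm ℓ
      _ = ((∑ k, c j k) * w j + c j j * w j) - ∑ ℓ, c j ℓ * w ℓ := by
          rw [Finset.sum_sub_distrib, Finset.sum_ite_eq' Finset.univ j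
            (fun _ => (∑ k, c j k) * w j + c j j * w j)]
          simp
      _ = ∑ ℓ, c j ℓ * (w j - w ℓ) := by
          rw [hcjj j]
          simp only [mul_sub, Finset.sum_sub_distrib, Finset.sum_mul]
          ring
  -- the key computation
  have hkey : dotProduct w (M.mulVec w) = c u v := by
    have hterm : ∀ j ℓ : Fin N, w j * (c j ℓ * (w j - w ℓ)) =
        if j = u ∧ ℓ = v then c u v else 0 := by
      intro j ℓ
      by_cases hadj : G.Adj j ℓ
      · by_cases hs : s(j, ℓ) = s(u, v)
        · rcases Sym2.eq_iff.mp hs with ⟨h1, h2⟩ | ⟨h1, h2⟩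
          · rw [if_pos ⟨h1, h2⟩, h1, h2, hwu, hwv, hc]; ring
          · have hne : ¬ (j = u ∧ ℓ = v) := by
              rintro ⟨he1, he2⟩
              exact G.ne_of_adj huv (he1.symm.trans h1)
            rw [if_neg hne, h1, hwv]; ring
        · have hwjl : w j = w ℓ := hsame j ℓ hadj hs
          have : ¬ (j = u ∧ ℓ = v) := by
            rintro ⟨rfl, rfl⟩; exact hs rfl
          rw [if_neg this, hwjl]; ring
      · have hK0 : K j ℓ = 0 := hKzero j ℓ hadj
        have : ¬ (j = u ∧ ℓ = v) := by
          rintro ⟨rfl, rfl⟩; exact hadj huv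
        rw [if_neg this]
        simp [hc, hK0]
    calc dotProduct w (M.mulVec w) = ∑ j, w j * (M.mulVec w) j := rfl
      _ = ∑ j, ∑ ℓ, w j * (c j ℓ * (w j - w ℓ)) := by
          refine Finset.sum_congr rfl fun j _ => ?_
          rw [hmv j, Finset.mul_sum]
      _ = ∑ j, ∑ ℓ, (if j = u ∧ ℓ = v then c u v else 0) := by
          exact Finset.sum_congr rfl fun j _ => Finset.sum_congr rfl fun ℓ _ => hterm j ℓ
      _ = c u v := by
          simp [Finset.sum_ite_eq, ite_and]
  have hneg : dotProduct w (M.mulVec w) < 0 := by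
    rw [hkey]
    exact mul_neg_of_pos_of_neg (hKpos u v huv) hcosneg
  refine ⟨hkey, hneg, ?_⟩
  intro hpsd
  have := hpsd.dotProduct_mulVec_nonneg w
  rw [show star w = w from rfl] at this
  exact absurd this (not_le.mpr hneg)
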